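/- arXiv:2004.06285 — 3 statements merged into one kernel-verified Lean document; each statement's English description precedes it below -/
import Mathlib

section
/- Let G be a connected simple graph of order n with minimum degree δ(G). If δ(G) ≥ (n+2)/2, then rvd(G) = n. -/
open SimpleGraph

/-- The graph obtained from `G` by removing (isolating) the vertices of `S`.
Since in our uses the endpoints of interest never lie in `S`, reachability
between them in this graph agrees with reachability in `G - S`. -/
def SimpleGraph.delVerts {V : Type*} (G : SimpleGraph V) (S : Set V) : SimpleGraph V where
  Adj u v := G.Adj u v ∧ u ∉ S ∧ v ∉ S
  symm := ⟨fun u v h => ⟨h.1.symm, h.2.2, h.2.1⟩⟩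
  loopless := ⟨fun v h => G.irrefl h.1⟩

/-- `c` is a rainbow vertex-disconnection coloring of `G`: every two distinct
vertices `x, y` admit an `x`-`y` rainbow vertex-cut. -/
def SimpleGraph.IsRVDColoring {V α : Type*} (G : SimpleGraph V) (c : V → α) : Prop :=
  ∀ x y : V, x ≠ y → ∃ S : Set V, x ∉ S ∧ y ∉ S ∧
    (¬ G.Adj x y → ¬ (G.delVerts S).Reachable x y ∧ Set.InjOn c S) ∧
    (G.Adj x y → ¬ ((G.deleteEdges {s(x, y)}).delVerts S).Reachable x y ∧
      (Set.InjOn c (S ∪ {x}) ∨ Set.InjOn c (S ∪ {y})))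

/-- The rainbow vertex-disconnection number of `G`: the minimum number of colors
in a rainbow vertex-disconnection coloring of `G`. -/
noncomputable def SimpleGraph.rvd {V : Type*} (G : SimpleGraph V) : ℕ :=
  sInf {k | ∃ c : V → Fin k, G.IsRVDColoring c}

lemma delVerts_adj {V : Type*} (G : SimpleGraph V) (S : Set V) (u v : V) :
    (G.delVerts S).Adj u v ↔ G.Adj u v ∧ u ∉ S ∧ v ∉ S := Iff.rfl

/-- Any injective coloring is an RVD coloring: take `S = (univ \ {x,y})`. -/
lemma isRVDColoring_of_injective {V α : Type*} (G : SimpleGraph V) (c : V → α)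
    (hc : Function.Injective c) : G.IsRVDColoring c := by
  intro x y hxy
  refine ⟨({x, y} : Set V)ᶜ, by simp, by simp, ?_, ?_⟩
  · intro hadj
    refine ⟨?_, hc.injOn⟩
    rintro ⟨w⟩
    cases w with
    | nil => exact hxy rfl
    | cons h p =>
      obtain ⟨ha, hx, hz⟩ := h
      simp only [Set.mem_compl_iff, Set.mem_insert_iff, Set.mem_singleton_iff, not_not] at hz
      rcases hz with rfl | rfl
      · exact G.irrefl ha
      · exact hadj ha
  · intro hadj
    refine ⟨?_, Or.inl hc.injOn⟩
    rintro ⟨w⟩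
    cases w with
    | nil => exact hxy rfl
    | cons h p =>
      obtain ⟨ha, hx, hz⟩ := h
      simp only [Set.mem_compl_iff, Set.mem_insert_iff, Set.mem_singleton_iff, not_not] at hz
      rcases hz with rfl | rfl
      · exact G.irrefl ha.1
      · simp [deleteEdges_adj] at ha

/-- If `G` is a connected graph of order `n` with minimum degree
`δ(G) ≥ (n+2)/2`, then `rvd(G) = n`. -/
theorem rvd_eq_card_of_minDegree {V : Type*} [Fintype V] (G : SimpleGraph V)
    [DecidableRel G.Adj] (hG : G.Connected)
    (hδ : ((Fintype.card V : ℝ) + 2) / 2 ≤ (G.minDegree : ℝ)) :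
    G.rvd = Fintype.card V := by
  haveI : Nonempty V := hG.nonempty
  set n := Fintype.card V with hn
  have hmem : n ∈ {k | ∃ c : V → Fin k, G.IsRVDColoring c} := by
    exact ⟨Fintype.equivFin V, isRVDColoring_of_injective G _ (Fintype.equivFin V).injective⟩
  -- key: any RVD coloring is injective
  have key : ∀ {k : ℕ} (c : V → Fin k), G.IsRVDColoring c → Function.Injective c := by
    intro k c hc u v huv
    haveI := Classical.decEq V
    by_contra hne
    -- degree sum bound
    have hdeg : n + 2 ≤ G.degree u + G.degree v := by
      have h1 : (n : ℝ) + 2 ≤ 2 * G.minDegree := by linarith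
      have h2 : n + 2 ≤ 2 * G.minDegree := by exact_mod_cast h1
      have := G.minDegree_le_degree u
      have := G.minDegree_le_degree v
      omega
    -- common neighbors
    have hcard : 1 < (G.neighborFinset u ∩ G.neighborFinset v).card := by
      have h1 := Finset.card_union_add_card_inter (G.neighborFinset u) (G.neighborFinset v)
      have h2 : (G.neighborFinset u ∪ G.neighborFinset v).card ≤ n :=
        Finset.card_le_univ _
      have hu := G.card_neighborFinset_eq_degree u
      have hv := G.card_neighborFinset_eq_degree v
      omega
    obtain ⟨x, hx, y, hy, hxy⟩ := Finset.one_lt_card.mp hcard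
    simp only [Finset.mem_inter, mem_neighborFinset] at hx hy
    obtain ⟨S, hxS, hyS, hnadj, hadj⟩ := hc x y hxy
    -- u and v must lie in every x-y cut
    have huS : ∀ w : V, G.Adj w x → G.Adj w y → w ∈ S := by
      intro w hwx hwy
      by_contra hwS
      by_cases h : G.Adj x y
      · obtain ⟨hr, _⟩ := hadj h
        apply hr
        have hwne : w ≠ y := fun hh => by subst hh; exact G.irrefl hwy
        have hwne' : w ≠ x := fun hh => by subst hh; exact G.irrefl hwx
        have e1 : ((G.deleteEdges {s(x, y)}).delVerts S).Adj x w := by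
          refine ⟨⟨hwx.symm, ?_⟩, hxS, hwS⟩
          intro hmem
          rw [fromEdgeSet_adj, Set.mem_singleton_iff, Sym2.eq_iff] at hmem
          rcases hmem.1 with ⟨_, h2⟩ | ⟨_, h2⟩
          · exact hwne h2
          · exact hwne' h2
        have e2 : ((G.deleteEdges {s(x, y)}).delVerts S).Adj w y := by
          refine ⟨⟨hwy, ?_⟩, hwS, hyS⟩
          intro hmem
          rw [fromEdgeSet_adj, Set.mem_singleton_iff, Sym2.eq_iff] at hmem
          rcases hmem.1 with ⟨h1, _⟩ | ⟨h1, _⟩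
          · exact hwne' h1
          · exact hwne h1
        exact e1.reachable.trans e2.reachable
      · obtain ⟨hr, _⟩ := hnadj h
        apply hr
        have e1 : (G.delVerts S).Adj x w := ⟨hwx.symm, hxS, hwS⟩
        have e2 : (G.delVerts S).Adj w y := ⟨hwy, hwS, hyS⟩
        exact e1.reachable.trans e2.reachable
    have huS' : u ∈ S := huS u hx.1 hy.1
    have hvS' : v ∈ S := huS v hx.2 hy.2
    by_cases h : G.Adj x y
    · obtain ⟨_, hinj⟩ := hadj h
      rcases hinj with hinj | hinj
      · exact hne (hinj (Or.inl huS') (Or.inl hvS') huv)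
      · exact hne (hinj (Or.inl huS') (Or.inl hvS') huv)
    · obtain ⟨_, hinj⟩ := hnadj h
      exact hne (hinj huS' hvS' huv)
  have hlb : ∀ k ∈ {k | ∃ c : V → Fin k, G.IsRVDColoring c}, n ≤ k := by
    rintro k ⟨c, hc⟩
    have := Fintype.card_le_of_injective c (key c hc)
    simpa using this
  exact le_antisymm (Nat.sInf_le hmem) (le_csInf ⟨n, hmem⟩ hlb)
end

section
/- Every injective coloring of a nontrivial connected simple graph G is a rainbow vertex-disconnection coloring of G; in particular rvd(G) ≤ χ_i(G). -/
open SimpleGraph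

/-- An injective coloring of `G`: any two distinct vertices having a common
neighbor receive different colors. -/
def SimpleGraph.IsInjectiveColoring {V α : Type*} (G : SimpleGraph V) (c : V → α) : Prop :=
  ∀ u v : V, u ≠ v → (∃ w : V, G.Adj u w ∧ G.Adj v w) → c u ≠ c v

/-- The injective chromatic number `χ_i(G)`. -/
noncomputable def SimpleGraph.injChromNum {V : Type*} (G : SimpleGraph V) : ℕ :=
  sInf {k | ∃ c : V → Fin k, G.IsInjectiveColoring c}

lemma inj_rvd_aux {V β : Type*} (G : SimpleGraph V) :
    ∀ c : V → β, G.IsInjectiveColoring c → G.IsRVDColoring c := by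
    intro c hc x y hxy
    refine ⟨G.neighborSet x \ {y}, ?_, ?_, ?_, ?_⟩
    · intro hx
      exact G.irrefl hx.1
    · intro hy
      exact hy.2 rfl
    · intro hnadj
      constructor
      · rintro ⟨p⟩
        cases p with
        | nil => exact hxy rfl
        | @cons _ w _ h q =>
          obtain ⟨hadj, -, hw⟩ := h
          rcases eq_or_ne w y with hy | hy
          · exact hnadj (hy ▸ hadj)
          · exact hw ⟨hadj, hy⟩
      · intro a ha b hb hab
        by_contra hne
        exact hc a b hne ⟨x, ha.1.symm, hb.1.symm⟩ hab
    · intro hadj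
      constructor
      · rintro ⟨p⟩
        cases p with
        | nil => exact hxy rfl
        | @cons _ w _ h q =>
          obtain ⟨⟨hadj', hne⟩, -, hw⟩ := h
          rcases eq_or_ne w y with hy | hy
          · exact hne (by subst hy; simp [SimpleGraph.fromEdgeSet_adj, hxy])
          · exact hw ⟨hadj', hy⟩
      · refine Or.inr ?_
        have hsub : ∀ a ∈ (G.neighborSet x \ {y}) ∪ {y}, G.Adj a x := by
          rintro a (ha | ha)
          · exact ha.1.symm
          · rw [Set.mem_singleton_iff] at ha
            rw [ha]; exact hadj.symm
        intro a ha b hb hab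
        by_contra hne
        exact hc a b hne ⟨x, hsub a ha, hsub b hb⟩ hab

/-- Every injective coloring of a nontrivial connected graph `G` is a rainbow
vertex-disconnection coloring of `G`; in particular `rvd(G) ≤ χ_i(G)`. -/
theorem injectiveColoring_isRVDColoring {V α : Type*} [Fintype V] [Nontrivial V]
    (G : SimpleGraph V) (hG : G.Connected) :
    (∀ c : V → α, G.IsInjectiveColoring c → G.IsRVDColoring c) ∧
      G.rvd ≤ G.injChromNum := by
  refine ⟨fun c => inj_rvd_aux G c, ?_⟩
  have hBne : {k | ∃ c : V → Fin k, G.IsInjectiveColoring c}.Nonempty := by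
    refine ⟨Fintype.card V, fun v => (Fintype.equivFin V) v, ?_⟩
    intro u v huv _ h
    exact huv ((Fintype.equivFin V).injective h)
  obtain ⟨c, hc⟩ := Nat.sInf_mem hBne
  exact Nat.sInf_le ⟨c, inj_rvd_aux G c hc⟩
end

section
/- Let G be a nontrivial connected simple graph of order n, and write m_G(x,y) for the number of common neighbors of x and y. Then rvd(G) = n−1 if and only if the following three conditions hold. (1) There exists a pair of distinct vertices x, y with m_G(x,y) ≤ 1. (2) For any two disjoint pairs {x,y} and {p,q} of distinct vertices with m_G(x,y) ≤ 1 and m_G(p,q) ≤ 1, after possibly swapping x with y and/or p with q, G contains one of the following configurations on {x,y,p,q}: (i) two further vertices u, v ∉ {x,y,p,q} together with the edges ux, xv, up, pv, uy, yq, qv (three internally disjoint u–v paths u-x-v, u-p-v and u-y-q-v), or (ii) the edges xp, xy, yp, xq, qp (x adjacent to p, and each of y and q adjacent to both x and p). (3) For any three pairwise distinct vertices x, y, z with m_G(x,y) ≤ 1, m_G(x,z) ≤ 1 and m_G(y,z) ≤ 1, G contains one of the following configurations on {x,y,z}: (iii) the triangle on x, y, z, or (iv) two further vertices u, v ∉ {x,y,z}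 and a labeling {a,b,c} = {x,y,z} together with the edges ua, av, ub, bc, cv (two internally disjoint u–v paths u-a-v and u-b-c-v). -/
open SimpleGraph

/-- The number of common neighbors of `x` and `y` in `G`. -/
noncomputable def SimpleGraph.mCommon {V : Type*} (G : SimpleGraph V) (x y : V) : ℕ :=
  {w | G.Adj x w ∧ G.Adj y w}.ncard

/-- Configuration (i): two vertices `u, v` outside `{x,y,p,q}` together with
three internally disjoint `u`-`v` paths `u-x-v`, `u-p-v` and `u-y-q-v`. -/
def SimpleGraph.ConfigI {V : Type*} (G : SimpleGraph V) (x y p q : V) : Prop :=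
  ∃ u v : V, u ≠ v ∧ u ∉ ({x, y, p, q} : Set V) ∧ v ∉ ({x, y, p, q} : Set V) ∧
    G.Adj u x ∧ G.Adj x v ∧ G.Adj u p ∧ G.Adj p v ∧ G.Adj u y ∧ G.Adj y q ∧ G.Adj q v

/-- Configuration (ii): `x` adjacent to `p`, and each of `y` and `q` adjacent
to both `x` and `p`. -/
def SimpleGraph.ConfigII {V : Type*} (G : SimpleGraph V) (x y p q : V) : Prop :=
  G.Adj x p ∧ G.Adj x y ∧ G.Adj y p ∧ G.Adj x q ∧ G.Adj q p

/-- Configuration (iv): two vertices `u, v` outside `{x,y,z}` and a labeling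
`{a,b,c} = {x,y,z}` with two internally disjoint `u`-`v` paths `u-a-v` and
`u-b-c-v`. -/
def SimpleGraph.ConfigIV {V : Type*} (G : SimpleGraph V) (x y z : V) : Prop :=
  ∃ u v a b c : V, u ≠ v ∧ u ∉ ({x, y, z} : Set V) ∧ v ∉ ({x, y, z} : Set V) ∧
    [a, b, c].Perm [x, y, z] ∧
    G.Adj u a ∧ G.Adj a v ∧ G.Adj u b ∧ G.Adj b c ∧ G.Adj c v


section PartA
variable {V : Type*} {G H : SimpleGraph V}

/-- the RVD condition for a single pair -/
def RVDCond {α : Type*} (G : SimpleGraph V) (c : V → α) (x y : V) : Prop :=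
  ∃ S : Set V, x ∉ S ∧ y ∉ S ∧
    (¬ G.Adj x y → ¬ (G.delVerts S).Reachable x y ∧ Set.InjOn c S) ∧
    (G.Adj x y → ¬ ((G.deleteEdges {s(x, y)}).delVerts S).Reachable x y ∧
      (Set.InjOn c (S ∪ {x}) ∨ Set.InjOn c (S ∪ {y})))

lemma isRVD_iff {α : Type*} (c : V → α) :
    G.IsRVDColoring c ↔ ∀ x y, x ≠ y → RVDCond G c x y := Iff.rfl

lemma not_reachable_of_inv (H : SimpleGraph V) (P : V → Prop)
    (hP : ∀ u v, H.Adj u v → P u → P v) {a b : V} (ha : P a) (hb : ¬ P b) :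
    ¬ H.Reachable a b := by
  intro hr
  obtain ⟨w⟩ := hr
  induction w with
  | nil => exact hb ha
  | cons h _ ih => exact ih (hP _ _ h ha) hb

lemma sep4 (hHG : ∀ u v, H.Adj u v → G.Adj u v) {a b w1 w2 : V} (S : Set V)
    (hS : ∀ u, u ∉ S ↔ (u = a ∨ u = b ∨ u = w1 ∨ u = w2))
    (hab : a ≠ b) (hw1b : w1 ≠ b) (hw2b : w2 ≠ b)
    (hnab : ¬ H.Adj a b)
    (h1 : ¬(G.Adj a w1 ∧ G.Adj w1 b)) (h2 : ¬(G.Adj a w2 ∧ G.Adj w2 b))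
    (h3 : ¬(G.Adj w1 w2 ∧ ((G.Adj a w1 ∧ G.Adj w2 b) ∨ (G.Adj a w2 ∧ G.Adj w1 b)))) :
    ¬ (H.delVerts S).Reachable a b := by
  set P : V → Prop := fun u => u = a ∨ (u = w1 ∧ (G.Adj a w1 ∨ (G.Adj a w2 ∧ G.Adj w2 w1)))
      ∨ (u = w2 ∧ (G.Adj a w2 ∨ (G.Adj a w1 ∧ G.Adj w1 w2))) with hPdef
  have hPb : ¬ P b := by
    rintro (h | ⟨h, -⟩ | ⟨h, -⟩)
    · exact hab h.symm
    · exact hw1b h.symm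
    · exact hw2b h.symm
  refine not_reachable_of_inv _ P ?_ (Or.inl rfl) hPb
  rintro u v ⟨huv, hu, hv⟩
  rw [hS] at hu hv
  intro hPu
  rcases hv with rfl | rfl | rfl | rfl
  · exact Or.inl rfl
  · -- v = b : derive False
    exfalso
    rcases hPu with rfl | ⟨rfl, hd⟩ | ⟨rfl, hd⟩
    · exact hnab huv
    · have hub := hHG _ _ huv
      rcases hd with h | ⟨h2', h2''⟩
      · exact h1 ⟨h, hub⟩
      · exact h3 ⟨h2''.symm, Or.inr ⟨h2', hub⟩⟩
    · have hub := hHG _ _ huv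
      rcases hd with h | ⟨h1', h1''⟩
      · exact h2 ⟨h, hub⟩
      · exact h3 ⟨h1'', Or.inl ⟨h1', hub⟩⟩
  · -- v = w1
    have hG := hHG _ _ huv
    rcases hPu with rfl | ⟨rfl, hd⟩ | ⟨rfl, hd⟩
    · exact Or.inr (Or.inl ⟨rfl, Or.inl hG⟩)
    · exact Or.inr (Or.inl ⟨rfl, hd⟩)
    · rcases hd with h | ⟨h', h''⟩
      · exact Or.inr (Or.inl ⟨rfl, Or.inr ⟨h, hG⟩⟩)
      · exact Or.inr (Or.inl ⟨rfl, Or.inl h'⟩)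
  · -- v = w2
    have hG := hHG _ _ huv
    rcases hPu with rfl | ⟨rfl, hd⟩ | ⟨rfl, hd⟩
    · exact Or.inr (Or.inr ⟨rfl, Or.inl hG⟩)
    · rcases hd with h | ⟨h', h''⟩
      · exact Or.inr (Or.inr ⟨rfl, Or.inr ⟨h, hG⟩⟩)
      · exact Or.inr (Or.inr ⟨rfl, Or.inl h'⟩)
    · exact Or.inr (Or.inr ⟨rfl, hd⟩)

lemma mem_cut2 {S : Set V} {a b w : V} (hr : ¬ (H.delVerts S).Reachable a b)
    (ha : a ∉ S) (hb : b ∉ S) (h1 : H.Adj a w) (h2 : H.Adj w b) : w ∈ S := by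
  by_contra hw
  exact hr ((Walk.cons (⟨h1, ha, hw⟩ : (H.delVerts S).Adj a w)
    (Walk.cons (⟨h2, hw, hb⟩ : (H.delVerts S).Adj w b) Walk.nil)).reachable)

lemma mem_cut3 {S : Set V} {a b w1 w2 : V} (hr : ¬ (H.delVerts S).Reachable a b)
    (ha : a ∉ S) (hb : b ∉ S) (h1 : H.Adj a w1) (h2 : H.Adj w1 w2) (h3 : H.Adj w2 b) :
    w1 ∈ S ∨ w2 ∈ S := by
  by_contra hw
  push_neg at hw
  exact hr ((Walk.cons (⟨h1, ha, hw.1⟩ : (H.delVerts S).Adj a w1)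
    (Walk.cons (⟨h2, hw.1, hw.2⟩ : (H.delVerts S).Adj w1 w2)
    (Walk.cons (⟨h3, hw.2, hb⟩ : (H.delVerts S).Adj w2 b) Walk.nil))).reachable)

lemma adj_del {a b u v : V} (h : G.Adj u v) (hne : u ≠ a ∧ u ≠ b ∨ v ≠ a ∧ v ≠ b) :
    (G.deleteEdges {s(a, b)}).Adj u v := by
  rw [SimpleGraph.deleteEdges_adj]
  refine ⟨h, ?_⟩
  simp only [Set.mem_singleton_iff, Sym2.eq_iff]
  rintro (⟨rfl, rfl⟩ | ⟨rfl, rfl⟩) <;> tauto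

lemma flipCond {α : Type*} {c : V → α} {a b : V} (h : RVDCond G c a b) : RVDCond G c b a := by
  obtain ⟨S, ha, hb, hn, hy⟩ := h
  refine ⟨S, hb, ha, ?_, ?_⟩
  · intro hadj
    obtain ⟨h1, h2⟩ := hn (fun h' => hadj h'.symm)
    exact ⟨fun r => h1 r.symm, h2⟩
  · intro hadj
    obtain ⟨h1, h2⟩ := hy hadj.symm
    constructor
    · rw [Sym2.eq_swap]
      exact fun r => h1 r.symm
    · exact h2.symm

/-- The master lemma producing an RVD condition witness from a 4-element cut frame. -/
lemma master {α : Type*} {c : V → α} {a b w1 w2 : V}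
    (hab : a ≠ b) (hw1b : w1 ≠ b) (hw2b : w2 ≠ b)
    (h1 : ¬(G.Adj a w1 ∧ G.Adj w1 b)) (h2 : ¬(G.Adj a w2 ∧ G.Adj w2 b))
    (h3 : ¬(G.Adj w1 w2 ∧ ((G.Adj a w1 ∧ G.Adj w2 b) ∨ (G.Adj a w2 ∧ G.Adj w1 b))))
    (hinj : ¬ G.Adj a b → Set.InjOn c ({a, b, w1, w2}ᶜ : Set V))
    (hinj2 : G.Adj a b →
      (Set.InjOn c (({a, b, w1, w2}ᶜ : Set V) ∪ {a}) ∨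
       Set.InjOn c (({a, b, w1, w2}ᶜ : Set V) ∪ {b}))) :
    RVDCond G c a b := by
  have hS : ∀ u, u ∉ ({a, b, w1, w2}ᶜ : Set V) ↔ (u = a ∨ u = b ∨ u = w1 ∨ u = w2) := by
    intro u; rw [Set.notMem_compl_iff]; simp
  refine ⟨({a, b, w1, w2}ᶜ : Set V), by simp, by simp, ?_, ?_⟩
  · intro hadj
    exact ⟨sep4 (fun _ _ h => h) _ hS hab hw1b hw2b hadj h1 h2 h3, hinj hadj⟩
  · intro hadj
    refine ⟨sep4 (fun u v h => (SimpleGraph.deleteEdges_adj).1 h |>.1) _ hS hab hw1b hw2b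
      ?_ h1 h2 h3, hinj2 hadj⟩
    rw [SimpleGraph.deleteEdges_adj]
    rintro ⟨-, h⟩
    exact h rfl

end PartA


section PartB
variable {V : Type*} {G : SimpleGraph V}

lemma card_ne_ne [Fintype V] {y q : V} [Fintype {v : V // v ≠ y ∧ v ≠ q}] (h : y ≠ q) :
    Fintype.card {v : V // v ≠ y ∧ v ≠ q} = Fintype.card V - 2 := by
  classical
  have e1 : {v : V // v ≠ y ∧ v ≠ q} ≃ {v : V // ¬(v = y ∨ v = q)} :=
    Equiv.subtypeEquivRight (by tauto)
  rw [Fintype.card_congr e1, Fintype.card_subtype_compl]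
  have h2 : Fintype.card {x : V // x = y ∨ x = q} = 2 := by
    rw [Fintype.card_subtype_or_disjoint _ _
      (by rintro p hp hq2 v hv; exact absurd ((hp v hv).symm.trans (hq2 v hv)) h)]
    rw [Fintype.card_subtype_eq, Fintype.card_subtype_eq]
  rw [h2]

lemma card_ne [Fintype V] (y : V) [Fintype {v : V // v ≠ y}] :
    Fintype.card {v : V // v ≠ y} = Fintype.card V - 1 := by
  classical
  rw [Fintype.card_subtype_compl, Fintype.card_subtype_eq]

private lemma merge2_eq [DecidableEq V] {x y p q u v : V} (hxp : x ≠ p) (hxq : x ≠ q)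
    (hpy : p ≠ y)
    (h : (if u = y then x else if u = q then p else u)
       = (if v = y then x else if v = q then p else v)) :
    u = v ∨ (u ∈ ({x, y} : Set V) ∧ v ∈ ({x, y} : Set V))
          ∨ (u ∈ ({p, q} : Set V) ∧ v ∈ ({p, q} : Set V)) := by
  simp only [Set.mem_insert_iff, Set.mem_singleton_iff]
  split_ifs at h <;> subst_vars <;> tauto

private lemma merge3_eq [DecidableEq V] {x y q u v : V}
    (h : (if u = y then x else if u = q then x else u)
       = (if v = y then x else if v = q then x else v)) :
    u = v ∨ (u ∈ ({x, y, q} : Set V) ∧ v ∈ ({x, y, q} : Set V)) := by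
  simp only [Set.mem_insert_iff, Set.mem_singleton_iff]
  split_ifs at h <;> subst_vars <;> tauto

private lemma merge1_eq [DecidableEq V] {x y u v : V}
    (h : (if u = y then x else u) = (if v = y then x else v)) :
    u = v ∨ (u ∈ ({x, y} : Set V) ∧ v ∈ ({x, y} : Set V)) := by
  simp only [Set.mem_insert_iff, Set.mem_singleton_iff]
  split_ifs at h <;> subst_vars <;> tauto

/-- two-class merged coloring with `card V - 2` colors -/
lemma exists_coloring2 [Fintype V] (x y p q : V) (hxy : x ≠ y) (hxp : x ≠ p) (hxq : x ≠ q)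
    (hpy : p ≠ y) (hpq : p ≠ q) (hyq : y ≠ q) :
    ∃ c : V → Fin (Fintype.card V - 2), c x = c y ∧ c p = c q ∧
      ∀ u v : V, c u = c v → u = v ∨ (u ∈ ({x, y} : Set V) ∧ v ∈ ({x, y} : Set V))
          ∨ (u ∈ ({p, q} : Set V) ∧ v ∈ ({p, q} : Set V)) := by
  classical
  set f : V → V := fun v => if v = y then x else if v = q then p else v with hf
  have hfm : ∀ v, f v ≠ y ∧ f v ≠ q := by
    intro v
    simp only [hf]
    split_ifs with h1 h2
    · exact ⟨hxy, hxq⟩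
    · exact ⟨hpy, hpq⟩
    · exact ⟨h1, h2⟩
  set g : V → {v : V // v ≠ y ∧ v ≠ q} := fun v => ⟨f v, hfm v⟩ with hg
  set e := (Fintype.equivFin {v : V // v ≠ y ∧ v ≠ q}).trans (finCongr (card_ne_ne hyq)) with he
  have hiff : ∀ u v : V, e (g u) = e (g v) ↔ f u = f v := by
    intro u v
    constructor
    · intro h
      exact congrArg Subtype.val (e.injective h)
    · intro h
      exact congrArg e (Subtype.ext h)
  refine ⟨fun v => e (g v), ?_, ?_, fun u v h => merge2_eq hxp hxq hpy ((hiff u v).1 h)⟩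
  · rw [hiff]
    simp only [hf]
    rw [if_neg hxy, if_neg hxq]
    simp
  · rw [hiff]
    simp only [hf]
    rw [if_neg hpy, if_neg hpq, if_neg (Ne.symm hyq)]
    simp

/-- three-merged-class coloring with `card V - 2` colors -/
lemma exists_coloring3 [Fintype V] (x y z : V) (hxy : x ≠ y) (hxz : x ≠ z) (hyz : y ≠ z) :
    ∃ c : V → Fin (Fintype.card V - 2),
      (∀ u ∈ ({x, y, z} : Set V), ∀ v ∈ ({x, y, z} : Set V), c u = c v) ∧
      ∀ u v : V, c u = c v → u = v ∨ (u ∈ ({x, y, z} : Set V) ∧ v ∈ ({x, y, z} : Set V)) := by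
  classical
  set f : V → V := fun v => if v = y then x else if v = z then x else v with hf
  have hfm : ∀ v, f v ≠ y ∧ f v ≠ z := by
    intro v
    simp only [hf]
    split_ifs with h1 h2
    · exact ⟨hxy, hxz⟩
    · exact ⟨hxy, hxz⟩
    · exact ⟨h1, h2⟩
  set g : V → {v : V // v ≠ y ∧ v ≠ z} := fun v => ⟨f v, hfm v⟩ with hg
  set e := (Fintype.equivFin {v : V // v ≠ y ∧ v ≠ z}).trans (finCongr (card_ne_ne hyz)) with he
  have hiff : ∀ u v : V, e (g u) = e (g v) ↔ f u = f v := by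
    intro u v
    constructor
    · intro h
      exact congrArg Subtype.val (e.injective h)
    · intro h
      exact congrArg e (Subtype.ext h)
  have hfx : ∀ u ∈ ({x, y, z} : Set V), f u = x := by
    rintro u (rfl | rfl | rfl)
    · simp only [hf]
      rw [if_neg hxy, if_neg hxz]
    · simp only [hf]
      simp
    · simp only [hf]
      rw [if_neg (Ne.symm hyz)]
      simp
  refine ⟨fun v => e (g v), ?_, fun u v h => merge3_eq ((hiff u v).1 h)⟩
  intro u hu v hv
  rw [hiff, hfx u hu, hfx v hv]

/-- one-merged-pair coloring with `card V - 1` colors -/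
lemma exists_coloring1 [Fintype V] (x y : V) (hxy : x ≠ y) :
    ∃ c : V → Fin (Fintype.card V - 1), c x = c y ∧
      ∀ u v : V, c u = c v → u = v ∨ (u ∈ ({x, y} : Set V) ∧ v ∈ ({x, y} : Set V)) := by
  classical
  set f : V → V := fun v => if v = y then x else v with hf
  have hfm : ∀ v, f v ≠ y := by
    intro v
    simp only [hf]
    split_ifs with h1
    · exact hxy
    · exact h1
  set g : V → {v : V // v ≠ y} := fun v => ⟨f v, hfm v⟩ with hg
  set e := (Fintype.equivFin {v : V // v ≠ y}).trans (finCongr (card_ne y)) with he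
  have hiff : ∀ u v : V, e (g u) = e (g v) ↔ f u = f v := by
    intro u v
    constructor
    · intro h
      exact congrArg Subtype.val (e.injective h)
    · intro h
      exact congrArg e (Subtype.ext h)
  refine ⟨fun v => e (g v), ?_, fun u v h => merge1_eq ((hiff u v).1 h)⟩
  rw [hiff]
  simp only [hf]
  rw [if_neg hxy]
  simp

lemma injOn_of_classes {α : Type*} {c : V → α} {W1 W2 : Set V}
    (cinj : ∀ u v, c u = c v → u = v ∨ (u ∈ W1 ∧ v ∈ W1) ∨ (u ∈ W2 ∧ v ∈ W2))
    {T : Set V} (h1 : (T ∩ W1).Subsingleton) (h2 : (T ∩ W2).Subsingleton) :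
    Set.InjOn c T := by
  intro u hu v hv h
  rcases cinj u v h with h | ⟨hu', hv'⟩ | ⟨hu', hv'⟩
  · exact h
  · exact h1 ⟨hu, hu'⟩ ⟨hv, hv'⟩
  · exact h2 ⟨hu, hu'⟩ ⟨hv, hv'⟩

lemma injOn_of_class {α : Type*} {c : V → α} {W1 : Set V}
    (cinj : ∀ u v, c u = c v → u = v ∨ (u ∈ W1 ∧ v ∈ W1))
    {T : Set V} (h1 : (T ∩ W1).Subsingleton) : Set.InjOn c T :=
  injOn_of_classes (W2 := W1) (fun u v h => (cinj u v h).imp_right Or.inl) h1 h1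

lemma subsing_of {T W : Set V} (w : V) (h : T ∩ W ⊆ {w}) : (T ∩ W).Subsingleton :=
  fun _ ha _ hb => (h ha).trans (h hb).symm

lemma two_le_mCommon [Fintype V] {w w' x y : V} (h1 : G.Adj x w) (h2 : G.Adj y w)
    (h3 : G.Adj x w') (h4 : G.Adj y w') (hne : w ≠ w') : 2 ≤ G.mCommon x y := by
  have hsub : ({w, w'} : Set V) ⊆ {t | G.Adj x t ∧ G.Adj y t} := by
    rintro t (rfl | rfl)
    · exact ⟨h1, h2⟩
    · simp only [Set.mem_setOf_eq]
      exact ⟨h3, h4⟩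
  calc 2 = ({w, w'} : Set V).ncard := (Set.ncard_pair hne).symm
    _ ≤ _ := Set.ncard_le_ncard hsub (Set.toFinite _)

lemma mCommon_comm (x y : V) : G.mCommon x y = G.mCommon y x := by
  unfold SimpleGraph.mCommon
  congr 1
  ext w
  exact and_comm

lemma pigeon [Fintype V] {k : ℕ} (c : V → Fin k) (hk : k ≤ Fintype.card V - 2)
    (h2 : 2 ≤ Fintype.card V) :
    (∃ x y z : V, x ≠ y ∧ x ≠ z ∧ y ≠ z ∧ c x = c y ∧ c x = c z) ∨
    (∃ x y p q : V, x ≠ y ∧ p ≠ q ∧ c x = c y ∧ c p = c q ∧ c x ≠ c p) := by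
  classical
  by_contra hcon
  push_neg at hcon
  obtain ⟨h3, h4⟩ := hcon
  by_cases hinj : Function.Injective c
  · have := Fintype.card_le_of_injective c hinj
    simp only [Fintype.card_fin] at this
    omega
  · rw [Function.not_injective_iff] at hinj
    obtain ⟨x, y, hcxy, hxy⟩ := hinj
    have key : ∀ u v : V, u ≠ y → v ≠ y → c u = c v → u = v := by
      intro u v hu hv h
      by_contra huv
      by_cases hcu : c u = c x
      · by_cases hux : u = x
        · subst hux
          exact h3 u y v hxy huv (Ne.symm hv) hcxy h
        · by_cases hvx : v = x
          · subst hvx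
            exact h3 v y u hxy (Ne.symm hux) (Ne.symm hu) hcxy h.symm
          · exact h3 x u v (Ne.symm hux) (Ne.symm hvx) huv hcu.symm (hcu.symm.trans h)
      · exact hcu (h4 u v x y huv hxy h hcxy)
    have hinj' : Function.Injective (fun v : {v : V // v ≠ y} => c v.1) := by
      rintro ⟨u, hu⟩ ⟨v, hv⟩ h
      exact Subtype.ext (key u v hu hv h)
    have := Fintype.card_le_of_injective _ hinj'
    rw [card_ne] at this
    simp only [Fintype.card_fin] at this
    omega

end PartB


section PartC
variable {V : Type*} {G : SimpleGraph V} {α : Type*} {c : V → α}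

/-- uniform access to a rainbow cut for a pair, hiding the adjacent/nonadjacent split -/
lemma rvd_cut {x y : V} (hc : G.IsRVDColoring c) (hxy : x ≠ y) :
    ∃ (H : SimpleGraph V) (S : Set V),
      (∀ u v, G.Adj u v → (u ≠ x ∨ v ≠ y) → (u ≠ y ∨ v ≠ x) → H.Adj u v) ∧
      x ∉ S ∧ y ∉ S ∧ ¬ (H.delVerts S).Reachable x y ∧
      ((¬ G.Adj x y ∧ Set.InjOn c S) ∨
       (G.Adj x y ∧ (Set.InjOn c (S ∪ {x}) ∨ Set.InjOn c (S ∪ {y})))) := by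
  obtain ⟨S, hxS, hyS, hn, ha⟩ := hc x y hxy
  by_cases hadj : G.Adj x y
  · obtain ⟨h1, h2⟩ := ha hadj
    refine ⟨G.deleteEdges {s(x, y)}, S, ?_, hxS, hyS, h1, Or.inr ⟨hadj, h2⟩⟩
    intro u v huv hd1 hd2
    rw [SimpleGraph.deleteEdges_adj]
    refine ⟨huv, ?_⟩
    simp only [Set.mem_singleton_iff, Sym2.eq_iff]
    rintro (⟨rfl, rfl⟩ | ⟨rfl, rfl⟩) <;> tauto
  · obtain ⟨h1, h2⟩ := hn hadj
    exact ⟨G, S, fun u v huv _ _ => huv, hxS, hyS, h1, Or.inl ⟨hadj, h2⟩⟩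

lemma color_ne_of_common [Fintype V] {u v : V} (hc : G.IsRVDColoring c) (huv : u ≠ v)
    (h : 2 ≤ G.mCommon u v) : c u ≠ c v := by
  have hlt : 1 < ({w | G.Adj u w ∧ G.Adj v w}).ncard := h
  rw [Set.one_lt_ncard_iff (Set.toFinite _)] at hlt
  obtain ⟨w, w', ⟨hw1, hw2⟩, hmem, hww⟩ := hlt
  obtain ⟨hw1', hw2'⟩ := hmem
  obtain ⟨H, S, hH, hwS, hw'S, hr, hinj⟩ := rvd_cut hc hww
  have huw : u ≠ w := fun h' => G.loopless.irrefl w (h' ▸ hw1)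
  have huw' : u ≠ w' := fun h' => G.loopless.irrefl w' (h' ▸ hw1')
  have hvw : v ≠ w := fun h' => G.loopless.irrefl w (h' ▸ hw2)
  have hvw' : v ≠ w' := fun h' => G.loopless.irrefl w' (h' ▸ hw2')
  have huS : u ∈ S := mem_cut2 hr hwS hw'S
    (hH _ _ hw1.symm (Or.inr huw') (Or.inl hww)) (hH _ _ hw1' (Or.inl huw) (Or.inl huw'))
  have hvS : v ∈ S := mem_cut2 hr hwS hw'S
    (hH _ _ hw2.symm (Or.inr hvw') (Or.inl hww)) (hH _ _ hw2' (Or.inl hvw) (Or.inl hvw'))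
  intro he
  rcases hinj with ⟨-, hi⟩ | ⟨-, hi | hi⟩
  · exact huv (hi huS hvS he)
  · exact huv (hi (Set.mem_union_left _ huS) (Set.mem_union_left _ hvS) he)
  · exact huv (hi (Set.mem_union_left _ huS) (Set.mem_union_left _ hvS) he)

lemma contr_tri {x y z : V} (hc : G.IsRVDColoring c)
    (h1 : G.Adj x y) (h2 : G.Adj y z) (h3 : G.Adj x z)
    (e1 : c x = c y) (e2 : c x = c z) : False := by
  have hxy : x ≠ y := h1.ne
  have hxz : x ≠ z := h3.ne
  have hyz : y ≠ z := h2.ne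
  obtain ⟨H, S, hH, hxS, hyS, hr, hinj⟩ := rvd_cut hc hxy
  have hzS : z ∈ S := mem_cut2 hr hxS hyS
    (hH _ _ h3 (Or.inr hyz.symm) (Or.inl hxy)) (hH _ _ h2.symm (Or.inl hxz.symm) (Or.inr hxy.symm))
  rcases hinj with ⟨hna, -⟩ | ⟨-, hi | hi⟩
  · exact hna h1
  · exact hxz (hi (Set.mem_union_right _ rfl) (Set.mem_union_left _ hzS) e2)
  · exact hyz (hi (Set.mem_union_right _ rfl) (Set.mem_union_left _ hzS) (e1.symm.trans e2))

lemma contr_IV {x y z : V} (hc : G.IsRVDColoring c) (cfg : G.ConfigIV x y z)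
    (hxy : x ≠ y) (hxz : x ≠ z) (hyz : y ≠ z)
    (hcs : ∀ u ∈ ({x, y, z} : Set V), ∀ v ∈ ({x, y, z} : Set V), c u = c v) : False := by
  obtain ⟨u, v, a, b, d, huv, hu, hv, hperm, g1, g2, g3, g4, g5⟩ := cfg
  have hma : a ∈ ({x, y, z} : Set V) := by
    have := hperm.mem_iff (a := a) |>.mp (by simp)
    simpa using this
  have hmb : b ∈ ({x, y, z} : Set V) := by
    have := hperm.mem_iff (a := b) |>.mp (by simp)
    simpa using this
  have hmd : d ∈ ({x, y, z} : Set V) := by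
    have := hperm.mem_iff (a := d) |>.mp (by simp)
    simpa using this
  have hnd : ([a, b, d]).Nodup := by
    rw [hperm.nodup_iff]
    simp [hxy, hxz, hyz]
  have hab : a ≠ b := by simp at hnd; tauto
  have had : a ≠ d := by simp at hnd; tauto
  have hbd : b ≠ d := by simp at hnd; tauto
  have hau : a ≠ u := fun h => hu (h ▸ hma)
  have hav : a ≠ v := fun h => hv (h ▸ hma)
  have hbu : b ≠ u := fun h => hu (h ▸ hmb)
  have hbv : b ≠ v := fun h => hv (h ▸ hmb)
  have hdu : d ≠ u := fun h => hu (h ▸ hmd)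
  have hdv : d ≠ v := fun h => hv (h ▸ hmd)
  obtain ⟨H, S, hH, huS, hvS, hr, hinj⟩ := rvd_cut hc huv
  have haS : a ∈ S := mem_cut2 hr huS hvS
    (hH _ _ g1 (Or.inr hav) (Or.inr hau)) (hH _ _ g2 (Or.inl hau) (Or.inl hav))
  have hbdS : b ∈ S ∨ d ∈ S := mem_cut3 hr huS hvS
    (hH _ _ g3 (Or.inr hbv) (Or.inr hbu)) (hH _ _ g4 (Or.inl hbu) (Or.inl hbv))
    (hH _ _ g5 (Or.inl hdu) (Or.inl hdv))
  have key : ∀ T : Set V, S ⊆ T → ¬ Set.InjOn c T := by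
    intro T hsub hi
    rcases hbdS with hbS | hdS
    · exact hab (hi (hsub haS) (hsub hbS) (hcs a hma b hmb))
    · exact had (hi (hsub haS) (hsub hdS) (hcs a hma d hmd))
  rcases hinj with ⟨-, hi⟩ | ⟨-, hi | hi⟩
  · exact key S (le_refl _) hi
  · exact key _ Set.subset_union_left hi
  · exact key _ Set.subset_union_left hi

lemma contr_I {x y p q : V} (hc : G.IsRVDColoring c) (cfg : G.ConfigI x y p q)
    (hxy : x ≠ y) (hpq : p ≠ q) (e1 : c x = c y) (e2 : c p = c q) : False := by
  obtain ⟨u, v, huv, hu, hv, g1, g2, g3, g4, g5, g6, g7⟩ := cfg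
  simp only [Set.mem_insert_iff, Set.mem_singleton_iff, not_or] at hu hv
  obtain ⟨hux, huy, hup, huq⟩ := hu
  obtain ⟨hvx, hvy, hvp, hvq⟩ := hv
  obtain ⟨H, S, hH, huS, hvS, hr, hinj⟩ := rvd_cut hc huv
  have hxS : x ∈ S := mem_cut2 hr huS hvS
    (hH _ _ g1 (Or.inr (Ne.symm hvx)) (Or.inr (Ne.symm hux)))
    (hH _ _ g2 (Or.inl (Ne.symm hux)) (Or.inl (Ne.symm hvx)))
  have hpS : p ∈ S := mem_cut2 hr huS hvS
    (hH _ _ g3 (Or.inr (Ne.symm hvp)) (Or.inr (Ne.symm hup)))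
    (hH _ _ g4 (Or.inl (Ne.symm hup)) (Or.inl (Ne.symm hvp)))
  have hyqS : y ∈ S ∨ q ∈ S := mem_cut3 hr huS hvS
    (hH _ _ g5 (Or.inr (Ne.symm hvy)) (Or.inr (Ne.symm huy)))
    (hH _ _ g6 (Or.inl (Ne.symm huy)) (Or.inl (Ne.symm hvy)))
    (hH _ _ g7 (Or.inl (Ne.symm huq)) (Or.inl (Ne.symm hvq)))
  have key : ∀ T : Set V, S ⊆ T → ¬ Set.InjOn c T := by
    intro T hsub hi
    rcases hyqS with hS | hS
    · exact hxy (hi (hsub hxS) (hsub hS) e1)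
    · exact hpq (hi (hsub hpS) (hsub hS) e2)
  rcases hinj with ⟨-, hi⟩ | ⟨-, hi | hi⟩
  · exact key S (le_refl _) hi
  · exact key _ Set.subset_union_left hi
  · exact key _ Set.subset_union_left hi

lemma contr_II {x y p q : V} (hc : G.IsRVDColoring c) (cfg : G.ConfigII x y p q)
    (hxy : x ≠ y) (hpq : p ≠ q) (e1 : c x = c y) (e2 : c p = c q) : False := by
  obtain ⟨g1, g2, g3, g4, g5⟩ := cfg
  have hxp : x ≠ p := g1.ne
  have hyp : y ≠ p := g3.ne
  have hxq : x ≠ q := g4.ne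
  have hqp : q ≠ p := g5.ne
  obtain ⟨H, S, hH, hxS, hpS, hr, hinj⟩ := rvd_cut hc hxp
  have hyS : y ∈ S := mem_cut2 hr hxS hpS
    (hH _ _ g2 (Or.inr hyp) (Or.inl hxp)) (hH _ _ g3 (Or.inl (Ne.symm hxy)) (Or.inl hyp))
  have hqS : q ∈ S := mem_cut2 hr hxS hpS
    (hH _ _ g4 (Or.inr hqp) (Or.inl hxp)) (hH _ _ g5 (Or.inl (Ne.symm hxq)) (Or.inl hqp))
  rcases hinj with ⟨hna, -⟩ | ⟨-, hi | hi⟩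
  · exact hna g1
  · exact hxy (hi (Set.mem_union_right _ rfl) (Set.mem_union_left _ hyS) e1)
  · exact hpq (hi (Set.mem_union_right _ rfl) (Set.mem_union_left _ hqS) e2)

end PartC


section PartD
variable {V : Type*} {G : SimpleGraph V}

/-- pick a class member that is not a common neighbour of a,b (using the class's singularity) -/
lemma exists_noncn [Fintype V] {a b p q : V} (m : G.mCommon p q ≤ 1) (hab : a ≠ b) :
    ∃ w, (w = p ∨ w = q) ∧ ¬(G.Adj a w ∧ G.Adj w b) := by
  by_contra h
  push_neg at h
  have hp := h p (Or.inl rfl)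
  have hq := h q (Or.inr rfl)
  have : 2 ≤ G.mCommon p q := two_le_mCommon hp.1.symm hq.1.symm hp.2 hq.2 hab
  omega

/-- pick one of p,q that is not a common neighbour of a,b (using singularity of (a,b)) -/
lemma exists_noncn' [Fintype V] {a b p q : V} (m : G.mCommon a b ≤ 1) (hpq : p ≠ q) :
    ∃ w, (w = p ∨ w = q) ∧ ¬(G.Adj a w ∧ G.Adj w b) := by
  by_contra h
  push_neg at h
  have hp := h p (Or.inl rfl)
  have hq := h q (Or.inr rfl)
  have : 2 ≤ G.mCommon a b := two_le_mCommon hp.1 hp.2.symm hq.1 hq.2.symm hpq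
  omega

lemma badbad [Fintype V] {a b w p q : V}
    (hb1 : G.Adj w p ∧ ((G.Adj a w ∧ G.Adj p b) ∨ (G.Adj a p ∧ G.Adj w b)))
    (hb2 : G.Adj w q ∧ ((G.Adj a w ∧ G.Adj q b) ∨ (G.Adj a q ∧ G.Adj w b)))
    (hncn : ¬(G.Adj a w ∧ G.Adj w b))
    (hwa : w ≠ a) (hwb : w ≠ b) (m2 : G.mCommon p q ≤ 1) : False := by
  obtain ⟨hwp, hd1⟩ := hb1
  obtain ⟨hwq, hd2⟩ := hb2
  rcases hd1 with ⟨h1, h2⟩ | ⟨h1, h2⟩ <;> rcases hd2 with ⟨h3, h4⟩ | ⟨h3, h4⟩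
  · have : 2 ≤ G.mCommon p q := two_le_mCommon hwp.symm hwq.symm h2 h4 hwb
    omega
  · exact hncn ⟨h1, h4⟩
  · exact hncn ⟨h3, h2⟩
  · have : 2 ≤ G.mCommon p q := two_le_mCommon hwp.symm hwq.symm h1.symm h3.symm hwa
    omega

lemma chooseW2core [Fintype V] {x y p q a b : V}
    (m1 : G.mCommon x y ≤ 1) (m2 : G.mCommon p q ≤ 1)
    (hxy : x ≠ y) (hpq : p ≠ q) (hab : a ≠ b)
    (hxa : x ≠ a) (hxb : x ≠ b) (hya : y ≠ a) (hyb : y ≠ b)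
    (hpa : p ≠ a) (hpb : p ≠ b) (hqa : q ≠ a) (hqb : q ≠ b)
    (hcfg : ¬ G.ConfigI y x q p)
    (hncn1 : ¬(G.Adj a x ∧ G.Adj x b)) (hncn2 : ¬(G.Adj a p ∧ G.Adj p b)) :
    ∃ w1 w2, (w1 = x ∨ w1 = y) ∧ (w2 = p ∨ w2 = q) ∧
      ¬(G.Adj a w1 ∧ G.Adj w1 b) ∧ ¬(G.Adj a w2 ∧ G.Adj w2 b) ∧
      ¬(G.Adj w1 w2 ∧ ((G.Adj a w1 ∧ G.Adj w2 b) ∨ (G.Adj a w2 ∧ G.Adj w1 b))) := by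
  by_cases hbad : G.Adj x p ∧ ((G.Adj a x ∧ G.Adj p b) ∨ (G.Adj a p ∧ G.Adj x b))
  · by_cases hcy : G.Adj a y ∧ G.Adj y b
    · by_cases hcq : G.Adj a q ∧ G.Adj q b
      · exfalso
        apply hcfg
        obtain ⟨hxp, hd⟩ := hbad
        rcases hd with ⟨h1, h2⟩ | ⟨h1, h2⟩
        · exact ⟨a, b, hab, by simp [hxa.symm, hya.symm, hpa.symm, hqa.symm],
            by simp [hxb.symm, hyb.symm, hpb.symm, hqb.symm],
            hcy.1, hcy.2, hcq.1, hcq.2, h1, hxp, h2⟩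
        · exact ⟨b, a, hab.symm, by simp [hxb.symm, hyb.symm, hpb.symm, hqb.symm],
            by simp [hxa.symm, hya.symm, hpa.symm, hqa.symm],
            hcy.2.symm, hcy.1.symm, hcq.2.symm, hcq.1.symm, h2.symm, hxp, h1.symm⟩
      · by_cases hbad2 : G.Adj x q ∧ ((G.Adj a x ∧ G.Adj q b) ∨ (G.Adj a q ∧ G.Adj x b))
        · exact absurd (badbad hbad hbad2 hncn1 hxa hxb m2) id
        · exact ⟨x, q, Or.inl rfl, Or.inr rfl, hncn1, hcq, hbad2⟩
    · by_cases hbad2 : G.Adj y p ∧ ((G.Adj a y ∧ G.Adj p b) ∨ (G.Adj a p ∧ G.Adj y b))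
      · refine absurd (badbad (w := p) (p := x) (q := y) ?_ ?_ hncn2 hpa hpb m1) id
        · exact ⟨hbad.1.symm, hbad.2.symm⟩
        · exact ⟨hbad2.1.symm, hbad2.2.symm⟩
      · exact ⟨y, p, Or.inr rfl, Or.inl rfl, hcy, hncn2, hbad2⟩
  · exact ⟨x, p, Or.inl rfl, Or.inl rfl, hncn1, hncn2, hbad⟩

lemma chooseW2 [Fintype V] {x y p q a b : V}
    (m1 : G.mCommon x y ≤ 1) (m2 : G.mCommon p q ≤ 1)
    (hxy : x ≠ y) (hpq : p ≠ q) (hab : a ≠ b)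
    (hxa : x ≠ a) (hxb : x ≠ b) (hya : y ≠ a) (hyb : y ≠ b)
    (hpa : p ≠ a) (hpb : p ≠ b) (hqa : q ≠ a) (hqb : q ≠ b)
    (hcfg : ∀ x' y' p' q', ((x' = x ∧ y' = y) ∨ (x' = y ∧ y' = x)) →
      ((p' = p ∧ q' = q) ∨ (p' = q ∧ q' = p)) → ¬ G.ConfigI x' y' p' q') :
    ∃ w1 w2, (w1 = x ∨ w1 = y) ∧ (w2 = p ∨ w2 = q) ∧
      ¬(G.Adj a w1 ∧ G.Adj w1 b) ∧ ¬(G.Adj a w2 ∧ G.Adj w2 b) ∧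
      ¬(G.Adj w1 w2 ∧ ((G.Adj a w1 ∧ G.Adj w2 b) ∨ (G.Adj a w2 ∧ G.Adj w1 b))) := by
  obtain ⟨u1, hu1m, hu1⟩ := exists_noncn m1 hab
  obtain ⟨u2, hu2m, hu2⟩ := exists_noncn m2 hab
  have m1' : G.mCommon y x ≤ 1 := by rwa [mCommon_comm] at m1
  have m2' : G.mCommon q p ≤ 1 := by rwa [mCommon_comm] at m2
  rcases hu1m with h1m | h1m <;> rcases hu2m with h2m | h2m <;> rw [h1m] at hu1 <;>
    rw [h2m] at hu2
  · exact chooseW2core m1 m2 hxy hpq hab hxa hxb hya hyb hpa hpb hqa hqb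
      (hcfg y x q p (Or.inr ⟨rfl, rfl⟩) (Or.inr ⟨rfl, rfl⟩)) hu1 hu2
  · obtain ⟨w1, w2, hm1, hm2, g1, g2, g3⟩ :=
      chooseW2core m1 m2' hxy hpq.symm hab hxa hxb hya hyb hqa hqb hpa hpb
      (hcfg y x p q (Or.inr ⟨rfl, rfl⟩) (Or.inl ⟨rfl, rfl⟩)) hu1 hu2
    exact ⟨w1, w2, hm1, hm2.symm, g1, g2, g3⟩
  · obtain ⟨w1, w2, hm1, hm2, g1, g2, g3⟩ :=
      chooseW2core m1' m2 hxy.symm hpq hab hya hyb hxa hxb hpa hpb hqa hqb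
      (hcfg x y q p (Or.inl ⟨rfl, rfl⟩) (Or.inr ⟨rfl, rfl⟩)) hu1 hu2
    exact ⟨w1, w2, hm1.symm, hm2, g1, g2, g3⟩
  · obtain ⟨w1, w2, hm1, hm2, g1, g2, g3⟩ :=
      chooseW2core m1' m2' hxy.symm hpq.symm hab hya hyb hxa hxb hqa hqb hpa hpb
      (hcfg x y p q (Or.inl ⟨rfl, rfl⟩) (Or.inl ⟨rfl, rfl⟩)) hu1 hu2
    exact ⟨w1, w2, hm1.symm, hm2.symm, g1, g2, g3⟩

lemma chooseW3 [Fintype V] {x y z a b : V}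
    (m1 : G.mCommon x y ≤ 1) (m2 : G.mCommon x z ≤ 1) (m3 : G.mCommon y z ≤ 1)
    (hxy : x ≠ y) (hxz : x ≠ z) (hyz : y ≠ z) (hab : a ≠ b)
    (hxa : x ≠ a) (hxb : x ≠ b) (hya : y ≠ a) (hyb : y ≠ b) (hza : z ≠ a) (hzb : z ≠ b)
    (htri : ¬(G.Adj x y ∧ G.Adj y z ∧ G.Adj x z)) (hIV : ¬ G.ConfigIV x y z) :
    ∃ w1 w2, (w1 = x ∨ w1 = y ∨ w1 = z) ∧ (w2 = x ∨ w2 = y ∨ w2 = z) ∧ w1 ≠ w2 ∧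
      ¬(G.Adj a w1 ∧ G.Adj w1 b) ∧ ¬(G.Adj a w2 ∧ G.Adj w2 b) ∧
      ¬(G.Adj w1 w2 ∧ ((G.Adj a w1 ∧ G.Adj w2 b) ∨ (G.Adj a w2 ∧ G.Adj w1 b))) := by
  have hmem1 : a ∉ ({x, y, z} : Set V) := by simp [hxa.symm, hya.symm, hza.symm]
  have hmem2 : b ∉ ({x, y, z} : Set V) := by simp [hxb.symm, hyb.symm, hzb.symm]
  by_cases hcx : G.Adj a x ∧ G.Adj x b
  · have hcy : ¬(G.Adj a y ∧ G.Adj y b) := by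
      rintro ⟨h1, h2⟩
      have : 2 ≤ G.mCommon x y := two_le_mCommon hcx.1.symm h1.symm hcx.2 h2 hab
      omega
    have hcz : ¬(G.Adj a z ∧ G.Adj z b) := by
      rintro ⟨h1, h2⟩
      have : 2 ≤ G.mCommon x z := two_le_mCommon hcx.1.symm h1.symm hcx.2 h2 hab
      omega
    by_cases hbad : G.Adj y z ∧ ((G.Adj a y ∧ G.Adj z b) ∨ (G.Adj a z ∧ G.Adj y b))
    · exfalso
      apply hIV
      obtain ⟨hyz', hd⟩ := hbad
      rcases hd with ⟨h1, h2⟩ | ⟨h1, h2⟩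
      · exact ⟨a, b, x, y, z, hab, hmem1, hmem2, List.Perm.refl _,
          hcx.1, hcx.2, h1, hyz', h2⟩
      · exact ⟨b, a, x, y, z, hab.symm, hmem2, hmem1, List.Perm.refl _,
          hcx.2.symm, hcx.1.symm, h2.symm, hyz', h1.symm⟩
    · exact ⟨y, z, Or.inr (Or.inl rfl), Or.inr (Or.inr rfl), hyz, hcy, hcz, hbad⟩
  · by_cases hcy : G.Adj a y ∧ G.Adj y b
    · have hcz : ¬(G.Adj a z ∧ G.Adj z b) := by
        rintro ⟨h1, h2⟩
        have : 2 ≤ G.mCommon y z := two_le_mCommon hcy.1.symm h1.symm hcy.2 h2 hab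
        omega
      by_cases hbad : G.Adj x z ∧ ((G.Adj a x ∧ G.Adj z b) ∨ (G.Adj a z ∧ G.Adj x b))
      · exfalso
        apply hIV
        obtain ⟨hxz', hd⟩ := hbad
        rcases hd with ⟨h1, h2⟩ | ⟨h1, h2⟩
        · exact ⟨a, b, y, x, z, hab, hmem1, hmem2, List.Perm.swap x y [z],
            hcy.1, hcy.2, h1, hxz', h2⟩
        · exact ⟨b, a, y, x, z, hab.symm, hmem2, hmem1, List.Perm.swap x y [z],
            hcy.2.symm, hcy.1.symm, h2.symm, hxz', h1.symm⟩
      · exact ⟨x, z, Or.inl rfl, Or.inr (Or.inr rfl), hxz, hcx, hcz, hbad⟩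
    · by_cases hcz : G.Adj a z ∧ G.Adj z b
      · by_cases hbad : G.Adj x y ∧ ((G.Adj a x ∧ G.Adj y b) ∨ (G.Adj a y ∧ G.Adj x b))
        · exfalso
          apply hIV
          obtain ⟨hxy', hd⟩ := hbad
          have hperm : ([z, x, y] : List V).Perm [x, y, z] :=
            (List.Perm.swap x z [y]).trans (List.Perm.cons x (List.Perm.swap y z []))
          rcases hd with ⟨h1, h2⟩ | ⟨h1, h2⟩
          · exact ⟨a, b, z, x, y, hab, hmem1, hmem2, hperm,
              hcz.1, hcz.2, h1, hxy', h2⟩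
          · exact ⟨b, a, z, x, y, hab.symm, hmem2, hmem1, hperm,
              hcz.2.symm, hcz.1.symm, h2.symm, hxy', h1.symm⟩
        · exact ⟨x, y, Or.inl rfl, Or.inr (Or.inl rfl), hxy, hcx, hcy, hbad⟩
      · by_cases e1 : G.Adj x y
        · by_cases e2 : G.Adj y z
          · have e3 : ¬ G.Adj x z := fun h => htri ⟨e1, e2, h⟩
            exact ⟨x, z, Or.inl rfl, Or.inr (Or.inr rfl), hxz, hcx, hcz,
              fun h => e3 h.1⟩
          · exact ⟨y, z, Or.inr (Or.inl rfl), Or.inr (Or.inr rfl), hyz, hcy, hcz,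
              fun h => e2 h.1⟩
        · exact ⟨x, y, Or.inl rfl, Or.inr (Or.inl rfl), hxy, hcx, hcy,
            fun h => e1 h.1⟩

lemma subsing_pair_excl {x y w : V} {T : Set V} (hw : w = x ∨ w = y) (hwT : w ∉ T) :
    (T ∩ {x, y}).Subsingleton := by
  rintro u ⟨huT, hu⟩ v ⟨hvT, hv⟩
  simp only [Set.mem_insert_iff, Set.mem_singleton_iff] at hu hv
  rcases hu with rfl | rfl <;> rcases hv with rfl | rfl <;> rcases hw with rfl | rfl <;>
    first
      | rfl
      | (exact absurd huT hwT)
      | (exact absurd hvT hwT)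

lemma subsing_triple_excl {x y z w1 w2 : V} {T : Set V} (h1 : w1 = x ∨ w1 = y ∨ w1 = z)
    (h2 : w2 = x ∨ w2 = y ∨ w2 = z) (hne : w1 ≠ w2) (e1 : w1 ∉ T) (e2 : w2 ∉ T) :
    (T ∩ {x, y, z}).Subsingleton := by
  rintro u ⟨huT, hu⟩ v ⟨hvT, hv⟩
  simp only [Set.mem_insert_iff, Set.mem_singleton_iff] at hu hv
  rcases hu with rfl | rfl | rfl <;> rcases hv with rfl | rfl | rfl <;>
    rcases h1 with rfl | rfl | rfl <;> rcases h2 with rfl | rfl | rfl <;>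
    first
      | rfl
      | (exact absurd huT e1)
      | (exact absurd hvT e1)
      | (exact absurd huT e2)
      | (exact absurd hvT e2)
      | (exact absurd rfl hne)

end PartD


section PartE
variable {V : Type*} {G : SimpleGraph V} {α : Type*}

lemma excl_union {S : Set V} {u e : V} (hu : u ∉ S) (hue : u ≠ e) : u ∉ S ∪ {e} := by
  rintro (h | h)
  · exact hu h
  · exact hue h

lemma subsing_excl2 {W T : Set V} {α' β w : V} (hW : ∀ u, u ∈ W ↔ (u = α' ∨ u = β))
    (hw : w = α' ∨ w = β) (hwT : w ∉ T) : (T ∩ W).Subsingleton := by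
  rintro u ⟨huT, hu⟩ v ⟨hvT, hv⟩
  rw [hW] at hu hv
  rcases hu with rfl | rfl <;> rcases hv with rfl | rfl <;> rcases hw with rfl | rfl <;>
    first
      | rfl
      | (exact absurd huT hwT)
      | (exact absurd hvT hwT)

lemma subsing_excl3 {W T : Set V} {x y z w1 w2 : V} (hW : ∀ u, u ∈ W ↔ (u = x ∨ u = y ∨ u = z))
    (h1 : w1 = x ∨ w1 = y ∨ w1 = z) (h2 : w2 = x ∨ w2 = y ∨ w2 = z) (hne : w1 ≠ w2)
    (e1 : w1 ∉ T) (e2 : w2 ∉ T) : (T ∩ W).Subsingleton := by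
  rintro u ⟨huT, hu⟩ v ⟨hvT, hv⟩
  rw [hW] at hu hv
  rcases hu with rfl | rfl | rfl <;> rcases hv with rfl | rfl | rfl <;>
    rcases h1 with rfl | rfl | rfl <;> rcases h2 with rfl | rfl | rfl <;>
    first
      | rfl
      | (exact absurd huT e1)
      | (exact absurd hvT e1)
      | (exact absurd huT e2)
      | (exact absurd hvT e2)
      | (exact absurd rfl hne)

/-- pair with first endpoint (or the frame vertex) hitting each class -/
lemma pair_half {c : V → α} {W1 W2 : Set V} {α1 β1 α2 β2 a b w : V}
    (cinj : ∀ u v, c u = c v → u = v ∨ (u ∈ W1 ∧ v ∈ W1) ∨ (u ∈ W2 ∧ v ∈ W2))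
    (hW1 : ∀ u, u ∈ W1 ↔ (u = α1 ∨ u = β1)) (hW2 : ∀ u, u ∈ W2 ↔ (u = α2 ∨ u = β2))
    (ha : a = α1 ∨ a = β1) (hwm : w = α2 ∨ w = β2)
    (hw : ¬(G.Adj a w ∧ G.Adj w b)) (hab : a ≠ b) (hwb : w ≠ b) :
    RVDCond G c a b := by
  refine master hab hwb hwb hw hw (fun h => G.loopless.irrefl _ h.1) (fun _ => ?_) (fun _ => Or.inr ?_)
  · exact injOn_of_classes cinj
      (subsing_excl2 hW1 ha (by simp))
      (subsing_excl2 hW2 hwm (by simp))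
  · exact injOn_of_classes cinj
      (subsing_excl2 hW1 ha (excl_union (by simp) hab))
      (subsing_excl2 hW2 hwm (excl_union (by simp) hwb))

/-- mixed pair: a in class 1 with mate a', b in class 2 with mate b' -/
lemma pair_mixed {c : V → α} {W1 W2 : Set V} {α1 β1 α2 β2 a a' b b' : V}
    (cinj : ∀ u v, c u = c v → u = v ∨ (u ∈ W1 ∧ v ∈ W1) ∨ (u ∈ W2 ∧ v ∈ W2))
    (hW1 : ∀ u, u ∈ W1 ↔ (u = α1 ∨ u = β1)) (hW2 : ∀ u, u ∈ W2 ↔ (u = α2 ∨ u = β2))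
    (ha : a = α1 ∨ a = β1) (ha' : a' = α1 ∨ a' = β1)
    (hb : b = α2 ∨ b = β2) (hb' : b' = α2 ∨ b' = β2)
    (hab : a ≠ b) (ha'b : a' ≠ b) (hb'b : b' ≠ b) (ha'a : a' ≠ a) (hb'a : b' ≠ a)
    (hcfgII : G.Adj a b → ¬(G.Adj a a' ∧ G.Adj a' b) ∨ ¬(G.Adj a b' ∧ G.Adj b' b)) :
    RVDCond G c a b := by
  by_cases hadj : G.Adj a b
  · rcases hcfgII hadj with hw | hw
    · refine master hab ha'b ha'b hw hw (fun h => G.loopless.irrefl _ h.1)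
        (fun hn => absurd hadj hn) (fun _ => Or.inl ?_)
      exact injOn_of_classes cinj
        (subsing_excl2 hW1 ha' (excl_union (by simp) ha'a))
        (subsing_excl2 hW2 hb (excl_union (by simp) (Ne.symm hab)))
    · refine master hab hb'b hb'b hw hw (fun h => G.loopless.irrefl _ h.1)
        (fun hn => absurd hadj hn) (fun _ => Or.inr ?_)
      exact injOn_of_classes cinj
        (subsing_excl2 hW1 ha (excl_union (by simp) hab))
        (subsing_excl2 hW2 hb' (excl_union (by simp) hb'b))
  · refine master hab hab hab (fun h => G.loopless.irrefl _ h.1) (fun h => G.loopless.irrefl _ h.1)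
      (fun h => G.loopless.irrefl _ h.1) (fun _ => ?_) (fun h => absurd h hadj)
    exact injOn_of_classes cinj
      (subsing_excl2 hW1 ha (by simp))
      (subsing_excl2 hW2 hb (by simp))

/-- triple class member pair helper -/
lemma pair_half3 {c : V → α} {W : Set V} {x y z a b w : V}
    (cinj : ∀ u v, c u = c v → u = v ∨ (u ∈ W ∧ v ∈ W))
    (hW : ∀ u, u ∈ W ↔ (u = x ∨ u = y ∨ u = z))
    (ha : a = x ∨ a = y ∨ a = z) (hwm : w = x ∨ w = y ∨ w = z)
    (hw : ¬(G.Adj a w ∧ G.Adj w b)) (hab : a ≠ b) (hwa : w ≠ a) (hwb : w ≠ b) :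
    RVDCond G c a b := by
  refine master hab hwb hwb hw hw (fun h => G.loopless.irrefl _ h.1) (fun _ => ?_) (fun _ => Or.inr ?_)
  · exact injOn_of_class cinj (subsing_excl3 hW ha hwm (Ne.symm hwa) (by simp) (by simp))
  · exact injOn_of_class cinj (subsing_excl3 hW ha hwm (Ne.symm hwa)
      (excl_union (by simp) hab) (excl_union (by simp) hwb))

lemma third_noncn {x y z a b : V} (hxy : x ≠ y) (hxz : x ≠ z) (hyz : y ≠ z)
    (htri : ¬(G.Adj x y ∧ G.Adj y z ∧ G.Adj x z)) (hadj : G.Adj a b)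
    (ha : a = x ∨ a = y ∨ a = z) (hb : b = x ∨ b = y ∨ b = z) :
    ∃ w, (w = x ∨ w = y ∨ w = z) ∧ w ≠ a ∧ w ≠ b ∧ ¬(G.Adj a w ∧ G.Adj w b) := by
  rcases ha with h | h | h <;> rcases hb with h' | h' | h' <;> rw [h, h'] at hadj <;>
    rw [h, h']
  · exact absurd hadj (G.loopless.irrefl x)
  · exact ⟨z, Or.inr (Or.inr rfl), Ne.symm hxz, Ne.symm hyz,
      fun hh => htri ⟨hadj, hh.2.symm, hh.1⟩⟩
  · exact ⟨y, Or.inr (Or.inl rfl), Ne.symm hxy, hyz,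
      fun hh => htri ⟨hh.1, hh.2, hadj⟩⟩
  · exact ⟨z, Or.inr (Or.inr rfl), Ne.symm hyz, Ne.symm hxz,
      fun hh => htri ⟨hadj.symm, hh.1, hh.2.symm⟩⟩
  · exact absurd hadj (G.loopless.irrefl y)
  · exact ⟨x, Or.inl rfl, hxy, hxz,
      fun hh => htri ⟨hh.1.symm, hadj, hh.2⟩⟩
  · exact ⟨y, Or.inr (Or.inl rfl), hyz, Ne.symm hxy,
      fun hh => htri ⟨hh.2.symm, hh.1.symm, hadj.symm⟩⟩
  · exact ⟨x, Or.inl rfl, hxz, hxy,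
      fun hh => htri ⟨hh.2, hadj.symm, hh.1.symm⟩⟩
  · exact absurd hadj (G.loopless.irrefl z)

/-- the coloring for a failed condition (3): `rvd ≤ n - 2` -/
lemma rvd_neg3 [Fintype V] {x y z : V} (hxy : x ≠ y) (hxz : x ≠ z) (hyz : y ≠ z)
    (m1 : G.mCommon x y ≤ 1) (m2 : G.mCommon x z ≤ 1) (m3 : G.mCommon y z ≤ 1)
    (htri : ¬(G.Adj x y ∧ G.Adj y z ∧ G.Adj x z)) (hIV : ¬ G.ConfigIV x y z) :
    ∃ c : V → Fin (Fintype.card V - 2), G.IsRVDColoring c := by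
  obtain ⟨c, hsame, cinj⟩ := exists_coloring3 (V := V) x y z hxy hxz hyz
  have hW : ∀ u, u ∈ ({x, y, z} : Set V) ↔ (u = x ∨ u = y ∨ u = z) := fun u => by simp
  have cinj' : ∀ u v, c u = c v → u = v ∨
      (u ∈ ({x, y, z} : Set V) ∧ v ∈ ({x, y, z} : Set V)) := cinj
  refine ⟨c, fun a b hab => ?_⟩
  have keyin : ∀ a b : V, a ≠ b → (a = x ∨ a = y ∨ a = z) → ¬(b = x ∨ b = y ∨ b = z) →
      RVDCond G c a b := by
    intro a b hab haW hbW
    have hw' : ∃ w, (w = x ∨ w = y ∨ w = z) ∧ w ≠ a ∧ ¬(G.Adj a w ∧ G.Adj w b) := by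
      rcases haW with h | h | h
      · obtain ⟨w, hm, hw⟩ := exists_noncn (p := y) (q := z) m3 hab
        refine ⟨w, by tauto, ?_, hw⟩
        rw [h]
        rcases hm with h' | h' <;> rw [h']
        · exact Ne.symm hxy
        · exact Ne.symm hxz
      · obtain ⟨w, hm, hw⟩ := exists_noncn (p := x) (q := z) m2 hab
        refine ⟨w, by tauto, ?_, hw⟩
        rw [h]
        rcases hm with h' | h' <;> rw [h']
        · exact hxy
        · exact Ne.symm hyz
      · obtain ⟨w, hm, hw⟩ := exists_noncn (p := x) (q := y) m1 hab
        refine ⟨w, by tauto, ?_, hw⟩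
        rw [h]
        rcases hm with h' | h' <;> rw [h']
        · exact hxz
        · exact hyz
    obtain ⟨w, hwm, hwa, hw⟩ := hw'
    have hwb : w ≠ b := fun hh => hbW (by rw [← hh]; exact hwm)
    exact pair_half3 cinj' hW haW hwm hw hab hwa hwb
  by_cases haW : a = x ∨ a = y ∨ a = z
  · by_cases hbW : b = x ∨ b = y ∨ b = z
    · by_cases hadj : G.Adj a b
      · obtain ⟨w, hwm, hwa, hwb, hw⟩ := third_noncn hxy hxz hyz htri hadj haW hbW
        exact pair_half3 cinj' hW haW hwm hw hab hwa hwb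
      · exact master hab hab hab (fun h => G.loopless.irrefl _ h.1) (fun h => G.loopless.irrefl _ h.1)
          (fun h => G.loopless.irrefl _ h.1)
          (fun _ => injOn_of_class cinj' (subsing_excl3 hW haW hbW hab (by simp) (by simp)))
          (fun h => absurd h hadj)
    · exact keyin a b hab haW hbW
  · by_cases hbW : b = x ∨ b = y ∨ b = z
    · exact flipCond (keyin b a (Ne.symm hab) hbW haW)
    · have hxa : x ≠ a := fun h => haW (Or.inl h.symm)
      have hya : y ≠ a := fun h => haW (Or.inr (Or.inl h.symm))
      have hza : z ≠ a := fun h => haW (Or.inr (Or.inr h.symm))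
      have hxb : x ≠ b := fun h => hbW (Or.inl h.symm)
      have hyb : y ≠ b := fun h => hbW (Or.inr (Or.inl h.symm))
      have hzb : z ≠ b := fun h => hbW (Or.inr (Or.inr h.symm))
      obtain ⟨w1, w2, h1m, h2m, hne, hc1, hc2, hbad⟩ :=
        chooseW3 m1 m2 m3 hxy hxz hyz hab hxa hxb hya hyb hza hzb htri hIV
      have hw1b : w1 ≠ b := fun h => hbW (by rw [← h]; exact h1m)
      have hw2b : w2 ≠ b := fun h => hbW (by rw [← h]; exact h2m)
      exact master hab hw1b hw2b hc1 hc2 hbad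
        (fun _ => injOn_of_class cinj' (subsing_excl3 hW h1m h2m hne (by simp) (by simp)))
        (fun _ => Or.inr (injOn_of_class cinj' (subsing_excl3 hW h1m h2m hne
          (excl_union (by simp) hw1b) (excl_union (by simp) hw2b))))

end PartE


section PartE2
variable {V : Type*} {G : SimpleGraph V}

/-- the coloring for a failed condition (2): `rvd ≤ n - 2` -/
lemma rvd_neg2 [Fintype V] {x y p q : V} (hxy : x ≠ y) (hpq : p ≠ q)
    (hxp : x ≠ p) (hxq : x ≠ q) (hyp : y ≠ p) (hyq : y ≠ q)
    (m1 : G.mCommon x y ≤ 1) (m2 : G.mCommon p q ≤ 1)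
    (hcfg : ∀ x' y' p' q', ((x' = x ∧ y' = y) ∨ (x' = y ∧ y' = x)) →
      ((p' = p ∧ q' = q) ∨ (p' = q ∧ q' = p)) →
      ¬ G.ConfigI x' y' p' q' ∧ ¬ G.ConfigII x' y' p' q') :
    ∃ c : V → Fin (Fintype.card V - 2), G.IsRVDColoring c := by
  obtain ⟨c, e1, e2, cinj⟩ := exists_coloring2 (V := V) x y p q hxy hxp hxq (Ne.symm hyp) hpq hyq
  have hW1 : ∀ u, u ∈ ({x, y} : Set V) ↔ (u = x ∨ u = y) := fun u => by simp
  have hW2 : ∀ u, u ∈ ({p, q} : Set V) ↔ (u = p ∨ u = q) := fun u => by simp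
  have cinjs : ∀ u v, c u = c v → u = v ∨
      (u ∈ ({p, q} : Set V) ∧ v ∈ ({p, q} : Set V)) ∨
      (u ∈ ({x, y} : Set V) ∧ v ∈ ({x, y} : Set V)) := by
    intro u v h
    rcases cinj u v h with h' | h' | h' <;> tauto
  have hcfg2a : ∀ a a' b b' : V, (a = x ∧ a' = y ∨ a = y ∧ a' = x) →
      (b = p ∧ b' = q ∨ b = q ∧ b' = p) → G.Adj a b →
      ¬(G.Adj a a' ∧ G.Adj a' b) ∨ ¬(G.Adj a b' ∧ G.Adj b' b) := by
    intro a a' b b' s1 s2 hadj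
    by_contra hcon
    push_neg at hcon
    obtain ⟨hA, hB⟩ := hcon
    exact (hcfg a a' b b' s1 s2).2 ⟨hadj, hA.1, hA.2, hB.1, hB.2⟩
  have hcfg2b : ∀ a a' b b' : V, (a = p ∧ a' = q ∨ a = q ∧ a' = p) →
      (b = x ∧ b' = y ∨ b = y ∧ b' = x) → G.Adj a b →
      ¬(G.Adj a a' ∧ G.Adj a' b) ∨ ¬(G.Adj a b' ∧ G.Adj b' b) := by
    intro a a' b b' s1 s2 hadj
    by_contra hcon
    push_neg at hcon
    obtain ⟨hA, hB⟩ := hcon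
    exact (hcfg b b' a a' s2 s1).2 ⟨hadj.symm, hB.2.symm, hB.1.symm, hA.2.symm, hA.1.symm⟩
  refine ⟨c, fun a b hab => ?_⟩
  by_cases haW1 : a = x ∨ a = y
  · by_cases hbW1 : b = x ∨ b = y
    · -- both in class 1
      have mab : G.mCommon a b ≤ 1 := by
        rcases haW1 with h | h <;> rcases hbW1 with h' | h' <;> rw [h, h'] at hab ⊢
        · exact absurd rfl hab
        · exact m1
        · rw [mCommon_comm]; exact m1
        · exact absurd rfl hab
      obtain ⟨w, hwm, hw⟩ := exists_noncn' mab hpq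
      have hwb : w ≠ b := by
        rcases hwm with h | h <;> rcases hbW1 with h' | h' <;> rw [h, h'] <;>
          first
            | exact Ne.symm hxp
            | exact Ne.symm hyp
            | exact Ne.symm hxq
            | exact Ne.symm hyq
      exact pair_half cinj hW1 hW2 haW1 hwm hw hab hwb
    · by_cases hbW2 : b = p ∨ b = q
      · -- mixed class1 - class2
        rcases haW1 with h | h <;> rcases hbW2 with h' | h'
        · exact pair_mixed cinj hW1 hW2 (Or.inl h) (Or.inr rfl) (Or.inl h') (Or.inr rfl) hab
            (by rw [h']; exact hyp) (by rw [h']; exact Ne.symm hpq)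
            (by rw [h]; exact Ne.symm hxy) (by rw [h]; exact Ne.symm hxq)
            (hcfg2a a y b q (Or.inl ⟨h, rfl⟩) (Or.inl ⟨h', rfl⟩))
        · exact pair_mixed cinj hW1 hW2 (Or.inl h) (Or.inr rfl) (Or.inr h') (Or.inl rfl) hab
            (by rw [h']; exact hyq) (by rw [h']; exact hpq)
            (by rw [h]; exact Ne.symm hxy) (by rw [h]; exact Ne.symm hxp)
            (hcfg2a a y b p (Or.inl ⟨h, rfl⟩) (Or.inr ⟨h', rfl⟩))
        · exact pair_mixed cinj hW1 hW2 (Or.inr h) (Or.inl rfl) (Or.inl h') (Or.inr rfl) hab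
            (by rw [h']; exact hxp) (by rw [h']; exact Ne.symm hpq)
            (by rw [h]; exact hxy) (by rw [h]; exact Ne.symm hyq)
            (hcfg2a a x b q (Or.inr ⟨h, rfl⟩) (Or.inl ⟨h', rfl⟩))
        · exact pair_mixed cinj hW1 hW2 (Or.inr h) (Or.inl rfl) (Or.inr h') (Or.inl rfl) hab
            (by rw [h']; exact hxq) (by rw [h']; exact hpq)
            (by rw [h]; exact hxy) (by rw [h]; exact Ne.symm hyp)
            (hcfg2a a x b p (Or.inr ⟨h, rfl⟩) (Or.inr ⟨h', rfl⟩))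
      · -- b outside both
        obtain ⟨w, hwm, hw⟩ := exists_noncn m2 hab
        have hwb : w ≠ b := fun hh => hbW2 (by rw [← hh]; exact hwm)
        exact pair_half cinj hW1 hW2 haW1 hwm hw hab hwb
  · by_cases haW2 : a = p ∨ a = q
    · by_cases hbW2 : b = p ∨ b = q
      · -- both in class 2
        have mab : G.mCommon a b ≤ 1 := by
          rcases haW2 with h | h <;> rcases hbW2 with h' | h' <;> rw [h, h'] at hab ⊢
          · exact absurd rfl hab
          · exact m2
          · rw [mCommon_comm]; exact m2
          · exact absurd rfl hab
        obtain ⟨w, hwm, hw⟩ := exists_noncn' mab hxy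
        have hwb : w ≠ b := by
          rcases hwm with h | h <;> rcases hbW2 with h' | h' <;> rw [h, h'] <;>
            first
              | exact hxp
              | exact hyp
              | exact hxq
              | exact hyq
        exact pair_half cinjs hW2 hW1 haW2 hwm hw hab hwb
      · by_cases hbW1 : b = x ∨ b = y
        · -- mixed class2 - class1
          rcases haW2 with h | h <;> rcases hbW1 with h' | h'
          · exact pair_mixed cinjs hW2 hW1 (Or.inl h) (Or.inr rfl) (Or.inl h') (Or.inr rfl) hab
              (by rw [h']; exact Ne.symm hxq) (by rw [h']; exact Ne.symm hxy)
              (by rw [h]; exact Ne.symm hpq) (by rw [h]; exact hyp)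
              (hcfg2b a q b y (Or.inl ⟨h, rfl⟩) (Or.inl ⟨h', rfl⟩))
          · exact pair_mixed cinjs hW2 hW1 (Or.inl h) (Or.inr rfl) (Or.inr h') (Or.inl rfl) hab
              (by rw [h']; exact Ne.symm hyq) (by rw [h']; exact hxy)
              (by rw [h]; exact Ne.symm hpq) (by rw [h]; exact hxp)
              (hcfg2b a q b x (Or.inl ⟨h, rfl⟩) (Or.inr ⟨h', rfl⟩))
          · exact pair_mixed cinjs hW2 hW1 (Or.inr h) (Or.inl rfl) (Or.inl h') (Or.inr rfl) hab
              (by rw [h']; exact Ne.symm hxp) (by rw [h']; exact Ne.symm hxy)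
              (by rw [h]; exact hpq) (by rw [h]; exact hyq)
              (hcfg2b a p b y (Or.inr ⟨h, rfl⟩) (Or.inl ⟨h', rfl⟩))
          · exact pair_mixed cinjs hW2 hW1 (Or.inr h) (Or.inl rfl) (Or.inr h') (Or.inl rfl) hab
              (by rw [h']; exact Ne.symm hyp) (by rw [h']; exact hxy)
              (by rw [h]; exact hpq) (by rw [h]; exact hxq)
              (hcfg2b a p b x (Or.inr ⟨h, rfl⟩) (Or.inr ⟨h', rfl⟩))
        · -- b outside both
          obtain ⟨w, hwm, hw⟩ := exists_noncn m1 hab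
          have hwb : w ≠ b := fun hh => hbW1 (by rw [← hh]; exact hwm)
          exact pair_half cinjs hW2 hW1 haW2 hwm hw hab hwb
    · -- a outside both
      by_cases hbW1 : b = x ∨ b = y
      · refine flipCond ?_
        obtain ⟨w, hwm, hw⟩ := exists_noncn m2 (Ne.symm hab)
        have hwa : w ≠ a := fun hh => haW2 (by rw [← hh]; exact hwm)
        exact pair_half cinj hW1 hW2 hbW1 hwm hw (Ne.symm hab) hwa
      · by_cases hbW2 : b = p ∨ b = q
        · refine flipCond ?_
          obtain ⟨w, hwm, hw⟩ := exists_noncn m1 (Ne.symm hab)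
          have hwa : w ≠ a := fun hh => haW1 (by rw [← hh]; exact hwm)
          exact pair_half cinjs hW2 hW1 hbW2 hwm hw (Ne.symm hab) hwa
        · -- both outside
          have hxa : x ≠ a := fun h => haW1 (Or.inl h.symm)
          have hya : y ≠ a := fun h => haW1 (Or.inr h.symm)
          have hxb : x ≠ b := fun h => hbW1 (Or.inl h.symm)
          have hyb : y ≠ b := fun h => hbW1 (Or.inr h.symm)
          have hpa : p ≠ a := fun h => haW2 (Or.inl h.symm)
          have hqa : q ≠ a := fun h => haW2 (Or.inr h.symm)
          have hpb : p ≠ b := fun h => hbW2 (Or.inl h.symm)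
          have hqb : q ≠ b := fun h => hbW2 (Or.inr h.symm)
          obtain ⟨w1, w2, h1m, h2m, hc1, hc2, hbad⟩ :=
            chooseW2 m1 m2 hxy hpq hab hxa hxb hya hyb hpa hpb hqa hqb
              (fun x' y' p' q' s1 s2 => (hcfg x' y' p' q' s1 s2).1)
          have hw1b : w1 ≠ b := fun h => hbW1 (by rw [← h]; exact h1m)
          have hw2b : w2 ≠ b := fun h => hbW2 (by rw [← h]; exact h2m)
          exact master hab hw1b hw2b hc1 hc2 hbad
            (fun _ => injOn_of_classes cinj (subsing_excl2 hW1 h1m (by simp))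
              (subsing_excl2 hW2 h2m (by simp)))
            (fun _ => Or.inr (injOn_of_classes cinj
              (subsing_excl2 hW1 h1m (excl_union (by simp) hw1b))
              (subsing_excl2 hW2 h2m (excl_union (by simp) hw2b))))

/-- the coloring for condition (1): `rvd ≤ n - 1` -/
lemma rvd_cond1 [Fintype V] {x y : V} (hxy : x ≠ y) (m1 : G.mCommon x y ≤ 1) :
    ∃ c : V → Fin (Fintype.card V - 1), G.IsRVDColoring c := by
  obtain ⟨c, e1, cinj⟩ := exists_coloring1 (V := V) x y hxy
  have hW : ∀ u, u ∈ ({x, y} : Set V) ↔ (u = x ∨ u = y) := fun u => by simp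
  refine ⟨c, fun a b hab => ?_⟩
  have keyin : ∀ a b : V, a ≠ b → (a = x ∨ a = y) → RVDCond G c a b := by
    intro a b hab ha
    refine master hab hab hab (fun h => G.loopless.irrefl _ h.1) (fun h => G.loopless.irrefl _ h.1)
      (fun h => G.loopless.irrefl _ h.1) (fun _ => ?_) (fun _ => Or.inr ?_)
    · exact injOn_of_class cinj (subsing_excl2 hW ha (by simp))
    · exact injOn_of_class cinj (subsing_excl2 hW ha (excl_union (by simp) hab))
  by_cases haW : a = x ∨ a = y
  · exact keyin a b hab haW
  · by_cases hbW : b = x ∨ b = y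
    · exact flipCond (keyin b a (Ne.symm hab) hbW)
    · obtain ⟨w, hwm, hw⟩ := exists_noncn m1 hab
      have hwb : w ≠ b := fun h => hbW (by rw [← h]; exact hwm)
      exact master hab hwb hwb hw hw (fun h => G.loopless.irrefl _ h.1)
        (fun _ => injOn_of_class cinj (subsing_excl2 hW hwm (by simp)))
        (fun _ => Or.inr (injOn_of_class cinj
          (subsing_excl2 hW hwm (excl_union (by simp) hwb))))

/-- the injective coloring is always an RVD coloring -/
lemma rvd_inj [Fintype V] : ∃ c : V → Fin (Fintype.card V), G.IsRVDColoring c := by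
  refine ⟨Fintype.equivFin V, fun a b hab => ?_⟩
  have hinj : ∀ T : Set V, Set.InjOn (Fintype.equivFin V) T :=
    fun T u _ v _ h => (Fintype.equivFin V).injective h
  exact master hab hab hab (fun h => G.loopless.irrefl _ h.1) (fun h => G.loopless.irrefl _ h.1)
    (fun h => G.loopless.irrefl _ h.1) (fun _ => hinj _) (fun _ => Or.inl (hinj _))

end PartE2


/-- Characterization of the nontrivial connected graphs of order `n` with
`rvd(G) = n - 1`. -/
theorem rvd_eq_card_sub_one_iff {V : Type*} [Fintype V] [Nontrivial V]
    (G : SimpleGraph V) (hG : G.Connected) :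
    G.rvd = Fintype.card V - 1 ↔
      ((∃ x y : V, x ≠ y ∧ G.mCommon x y ≤ 1) ∧
       (∀ x y p q : V, x ≠ y → p ≠ q → ({x, y} : Set V) ∩ {p, q} = ∅ →
          G.mCommon x y ≤ 1 → G.mCommon p q ≤ 1 →
          ∃ x' y' p' q' : V,
            ((x' = x ∧ y' = y) ∨ (x' = y ∧ y' = x)) ∧
            ((p' = p ∧ q' = q) ∨ (p' = q ∧ q' = p)) ∧
            (G.ConfigI x' y' p' q' ∨ G.ConfigII x' y' p' q')) ∧
       (∀ x y z : V, x ≠ y → x ≠ z → y ≠ z →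
          G.mCommon x y ≤ 1 → G.mCommon x z ≤ 1 → G.mCommon y z ≤ 1 →
          ((G.Adj x y ∧ G.Adj y z ∧ G.Adj x z) ∨ G.ConfigIV x y z))) := by
  classical
  have hn : 2 ≤ Fintype.card V := Fintype.one_lt_card
  have hKne : {k | ∃ c : V → Fin k, G.IsRVDColoring c}.Nonempty := ⟨Fintype.card V, rvd_inj⟩
  have hrK : G.rvd = sInf {k | ∃ c : V → Fin k, G.IsRVDColoring c} := rfl
  constructor
  · intro h
    obtain ⟨c, hc⟩ : ∃ c : V → Fin (Fintype.card V - 1), G.IsRVDColoring c := by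
      have := Nat.sInf_mem hKne
      rw [← hrK, h] at this
      exact this
    have mle : ∀ {u v : V}, u ≠ v → c u = c v → G.mCommon u v ≤ 1 := by
      intro u v huv he
      by_contra hm
      exact color_ne_of_common hc huv (by omega) he
    refine ⟨?_, ?_, ?_⟩
    · by_contra hno
      push_neg at hno
      have hinj : Function.Injective c := by
        intro u v he
        by_contra huv
        have h1 := mle huv he
        have h2 := hno u v huv
        omega
      have := Fintype.card_le_of_injective c hinj
      simp only [Fintype.card_fin] at this
      omega
    · intro x y p q hxy hpq hdisj mm1 mm2
      by_contra hno
      simp only [not_exists, not_and, not_or] at hno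
      have hxp : x ≠ p := by
        intro hh
        have : x ∈ ({x, y} : Set V) ∩ {p, q} := ⟨by simp, by simp [hh]⟩
        rw [hdisj] at this
        exact this
      have hxq : x ≠ q := by
        intro hh
        have : x ∈ ({x, y} : Set V) ∩ {p, q} := ⟨by simp, by simp [hh]⟩
        rw [hdisj] at this
        exact this
      have hyp' : y ≠ p := by
        intro hh
        have : y ∈ ({x, y} : Set V) ∩ {p, q} := ⟨by simp, by simp [hh]⟩
        rw [hdisj] at this
        exact this
      have hyq : y ≠ q := by
        intro hh
        have : y ∈ ({x, y} : Set V) ∩ {p, q} := ⟨by simp, by simp [hh]⟩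
        rw [hdisj] at this
        exact this
      obtain ⟨c2, hc2⟩ := rvd_neg2 hxy hpq hxp hxq hyp' hyq mm1 mm2
        (fun x' y' p' q' s1 s2 => ⟨(hno x' y' p' q' s1 s2).1, (hno x' y' p' q' s1 s2).2⟩)
      have hle : sInf {k | ∃ c : V → Fin k, G.IsRVDColoring c} ≤ Fintype.card V - 2 :=
        Nat.sInf_le ⟨c2, hc2⟩
      rw [← hrK, h] at hle
      omega
    · intro x y z hxy hxz hyz mm1 mm2 mm3
      by_contra hno
      rw [not_or] at hno
      obtain ⟨c2, hc2⟩ := rvd_neg3 hxy hxz hyz mm1 mm2 mm3 hno.1 hno.2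
      have hle : sInf {k | ∃ c : V → Fin k, G.IsRVDColoring c} ≤ Fintype.card V - 2 :=
        Nat.sInf_le ⟨c2, hc2⟩
      rw [← hrK, h] at hle
      omega
  · rintro ⟨⟨x, y, hxy, m1⟩, h2, h3⟩
    have hub : Fintype.card V - 1 ∈ {k | ∃ c : V → Fin k, G.IsRVDColoring c} := by
      obtain ⟨c, hc⟩ := rvd_cond1 (G := G) hxy m1
      exact ⟨c, hc⟩
    have hlb : ∀ k ∈ {k | ∃ c : V → Fin k, G.IsRVDColoring c}, Fintype.card V - 1 ≤ k := by
      rintro k ⟨c, hc⟩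
      by_contra hlt
      push_neg at hlt
      have hk2 : k ≤ Fintype.card V - 2 := by omega
      have mle : ∀ {u v : V}, u ≠ v → c u = c v → G.mCommon u v ≤ 1 := by
        intro u v huv he
        by_contra hm
        exact color_ne_of_common hc huv (by omega) he
      rcases pigeon c hk2 hn with ⟨u, v, w, huv, huw, hvw, e1, e2⟩ |
        ⟨u, v, s, t, huv, hst, e1, e2, hne⟩
      · have hcfg := h3 u v w huv huw hvw (mle huv e1) (mle huw e2)
          (mle hvw (e1.symm.trans e2))
        rcases hcfg with ⟨t1, t2, t3⟩ | cfg
        · exact contr_tri hc t1 t2 t3 e1 e2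
        · refine contr_IV hc cfg huv huw hvw ?_
          rintro a (rfl | rfl | rfl) b (rfl | rfl | rfl) <;>
            first
              | rfl
              | exact e1
              | exact e2
              | exact e1.symm
              | exact e2.symm
              | exact e1.symm.trans e2
              | exact e2.symm.trans e1
      · have hus : u ≠ s := fun hh => hne (hh ▸ rfl)
        have hut : u ≠ t := fun hh => hne ((hh ▸ rfl : c u = c t).trans e2.symm)
        have hvs : v ≠ s := fun hh => hne (e1.trans (hh ▸ rfl))
        have hvt : v ≠ t := fun hh => hne (e1.trans ((hh ▸ rfl : c v = c t).trans e2.symm))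
        have hdisj : ({u, v} : Set V) ∩ {s, t} = ∅ := by
          apply Set.eq_empty_iff_forall_notMem.mpr
          rintro w' ⟨h1', h2'⟩
          simp only [Set.mem_insert_iff, Set.mem_singleton_iff] at h1' h2'
          rcases h1' with rfl | rfl <;> rcases h2' with rfl | rfl
          · exact hus rfl
          · exact hut rfl
          · exact hvs rfl
          · exact hvt rfl
        obtain ⟨x', y', p', q', s1, s2, hcfg'⟩ := h2 u v s t huv hst hdisj
          (mle huv e1) (mle hst e2)
        have e1' : c x' = c y' := by
          rcases s1 with ⟨rfl, rfl⟩ | ⟨rfl, rfl⟩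
          · exact e1
          · exact e1.symm
        have e2' : c p' = c q' := by
          rcases s2 with ⟨rfl, rfl⟩ | ⟨rfl, rfl⟩
          · exact e2
          · exact e2.symm
        have hxy' : x' ≠ y' := by
          rcases s1 with ⟨rfl, rfl⟩ | ⟨rfl, rfl⟩
          · exact huv
          · exact huv.symm
        have hpq' : p' ≠ q' := by
          rcases s2 with ⟨rfl, rfl⟩ | ⟨rfl, rfl⟩
          · exact hst
          · exact hst.symm
        rcases hcfg' with cI | cII
        · exact contr_I hc cI hxy' hpq' e1' e2'
        · exact contr_II hc cII hxy' hpq' e1' e2'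
    rw [hrK]
    exact le_antisymm (Nat.sInf_le hub) (hlb _ (Nat.sInf_mem hKne))
end
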